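/- Let p, n be positive integers with 1 ≤ n < p, and κ ≥ 1 a real number. Let S be a symmetric positive semidefinite p×p real matrix of rank n (equivalently, its eigenvalues satisfy λ̂₁ ≥ ⋯ ≥ λ̂_n > 0 = λ̂_{n+1} = ⋯ = λ̂_p). Then every matrix Σ̂ ∈ F(κ) that minimizes ‖Σ − S‖_F over Σ ∈ F(κ) satisfies λ_max(Σ̂) = κ·λ_min(Σ̂); i.e., in the high-dimensional (rank-deficient) setting the condition number of the optimal solution is exactly κ. -/

import Mathlib

open Matrix

/-- The largest eigenvalue of a (symmetric) real matrix, as the supremum of its spectrum. -/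
noncomputable def lamMax {p : ℕ} (A : Matrix (Fin p) (Fin p) ℝ) : ℝ := sSup (spectrum ℝ A)

/-- The smallest eigenvalue of a (symmetric) real matrix, as the infimum of its spectrum. -/
noncomputable def lamMin {p : ℕ} (A : Matrix (Fin p) (Fin p) ℝ) : ℝ := sInf (spectrum ℝ A)

/-- The Frobenius norm of a real matrix. -/
noncomputable def frobNorm {p : ℕ} (A : Matrix (Fin p) (Fin p) ℝ) : ℝ :=
  Real.sqrt (∑ i, ∑ j, (A i j) ^ 2)

section AuxC3MA

open Pointwise

variable {p : ℕ}

lemma specFinite (A : Matrix (Fin p) (Fin p) ℝ) : (spectrum ℝ A).Finite :=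
  A.finite_real_spectrum

lemma specNonempty (hp : 0 < p) {A : Matrix (Fin p) (Fin p) ℝ} (hA : A.IsHermitian) :
    (spectrum ℝ A).Nonempty := by
  have : Nonempty (Fin p) := Fin.pos_iff_nonempty.mp hp
  rw [hA.spectrum_real_eq_range_eigenvalues]
  exact Set.range_nonempty _

lemma specNonneg {A : Matrix (Fin p) (Fin p) ℝ} (hA : A.PosSemidef) :
    ∀ r ∈ spectrum ℝ A, 0 ≤ r := by
  intro r hr
  rw [hA.1.spectrum_real_eq_range_eigenvalues] at hr
  obtain ⟨i, rfl⟩ := hr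
  exact hA.eigenvalues_nonneg i

lemma hermSmul {c : ℝ} {A : Matrix (Fin p) (Fin p) ℝ} (hA : A.IsHermitian) :
    (c • A).IsHermitian := by
  rw [Matrix.IsHermitian, conjTranspose_smul, star_trivial, hA.eq]

lemma psdSmul {c : ℝ} {A : Matrix (Fin p) (Fin p) ℝ} (hc : 0 ≤ c) (hA : A.PosSemidef) :
    (c • A).PosSemidef := by
  refine PosSemidef.of_dotProduct_mulVec_nonneg (hermSmul hA.1) fun x => ?_
  · have := hA.dotProduct_mulVec_nonneg x
    rw [Matrix.smul_mulVec, dotProduct_smul]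
    exact mul_nonneg hc this

lemma pdSmul {c : ℝ} {A : Matrix (Fin p) (Fin p) ℝ} (hc : 0 < c) (hA : A.PosDef) :
    (c • A).PosDef := by
  refine PosDef.of_dotProduct_mulVec_pos (hermSmul hA.1) fun x hx => ?_
  · have := hA.dotProduct_mulVec_pos hx
    rw [Matrix.smul_mulVec, dotProduct_smul]
    exact mul_pos hc this

lemma upperPSD {c : ℝ} {A : Matrix (Fin p) (Fin p) ℝ} (hA : A.IsHermitian)
    (hc : ∀ r ∈ spectrum ℝ A, r ≤ c) : (c • (1 : Matrix (Fin p) (Fin p) ℝ) - A).PosSemidef := by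
  have hH : (c • (1 : Matrix (Fin p) (Fin p) ℝ) - A).IsHermitian :=
    (hermSmul isHermitian_one).sub hA
  refine hH.posSemidef_iff_eigenvalues_nonneg.mpr (Pi.le_def.mpr fun i => ?_)
  have key : spectrum ℝ (c • (1 : Matrix (Fin p) (Fin p) ℝ) - A) = ({c} : Set ℝ) - spectrum ℝ A := by
    rw [show c • (1 : Matrix (Fin p) (Fin p) ℝ) = algebraMap ℝ _ c from
      (Algebra.algebraMap_eq_smul_one c).symm]
    exact (spectrum.singleton_sub_eq A c).symm
  have hmem := Set.mem_of_mem_of_subset (hH.eigenvalues_mem_spectrum_real i) key.subset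
  obtain ⟨x, hx, y, hy, hxy⟩ := hmem
  rw [Set.mem_singleton_iff] at hx
  subst hx
  rw [← hxy]
  show (0:ℝ) ≤ x - y
  linarith [hc y hy]

lemma lowerPSD {c : ℝ} {A : Matrix (Fin p) (Fin p) ℝ} (hA : A.IsHermitian)
    (hc : ∀ r ∈ spectrum ℝ A, c ≤ r) : (A - c • (1 : Matrix (Fin p) (Fin p) ℝ)).PosSemidef := by
  have hH : (A - c • (1 : Matrix (Fin p) (Fin p) ℝ)).IsHermitian :=
    hA.sub (hermSmul isHermitian_one)
  refine hH.posSemidef_iff_eigenvalues_nonneg.mpr (Pi.le_def.mpr fun i => ?_)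
  have key : spectrum ℝ (A - c • (1 : Matrix (Fin p) (Fin p) ℝ)) = spectrum ℝ A - ({c} : Set ℝ) := by
    rw [show c • (1 : Matrix (Fin p) (Fin p) ℝ) = algebraMap ℝ _ c from
      (Algebra.algebraMap_eq_smul_one c).symm]
    exact (spectrum.sub_singleton_eq A c).symm
  have hmem := Set.mem_of_mem_of_subset (hH.eigenvalues_mem_spectrum_real i) key.subset
  obtain ⟨x, hx, y, hy, hxy⟩ := hmem
  rw [Set.mem_singleton_iff] at hy
  subst hy
  rw [← hxy]
  show (0:ℝ) ≤ x - y
  linarith [hc x hx]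

lemma specLeOfUpper {c : ℝ} {A : Matrix (Fin p) (Fin p) ℝ}
    (h : (c • (1 : Matrix (Fin p) (Fin p) ℝ) - A).PosSemidef) :
    ∀ r ∈ spectrum ℝ A, r ≤ c := by
  intro r hr
  have : c - r ∈ spectrum ℝ (c • (1 : Matrix (Fin p) (Fin p) ℝ) - A) := by
    rw [show c • (1 : Matrix (Fin p) (Fin p) ℝ) = algebraMap ℝ _ c from
      (Algebra.algebraMap_eq_smul_one c).symm, ← spectrum.singleton_sub_eq]
    exact Set.sub_mem_sub rfl hr
  linarith [specNonneg h _ this]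

lemma specGeOfLower {c : ℝ} {A : Matrix (Fin p) (Fin p) ℝ}
    (h : (A - c • (1 : Matrix (Fin p) (Fin p) ℝ)).PosSemidef) :
    ∀ r ∈ spectrum ℝ A, c ≤ r := by
  intro r hr
  have : r - c ∈ spectrum ℝ (A - c • (1 : Matrix (Fin p) (Fin p) ℝ)) := by
    rw [show c • (1 : Matrix (Fin p) (Fin p) ℝ) = algebraMap ℝ _ c from
      (Algebra.algebraMap_eq_smul_one c).symm, ← spectrum.sub_singleton_eq]
    exact Set.sub_mem_sub hr rfl
  linarith [specNonneg h _ this]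

lemma frobSmul {c : ℝ} (A : Matrix (Fin p) (Fin p) ℝ) (hc : 0 ≤ c) :
    frobNorm (c • A) = c * frobNorm A := by
  unfold frobNorm
  have h : ∑ i, ∑ j, ((c • A) i j)^2 = c^2 * ∑ i, ∑ j, (A i j)^2 := by
    simp only [Matrix.smul_apply, smul_eq_mul, mul_pow, Finset.mul_sum]
  rw [h, Real.sqrt_mul (sq_nonneg c), Real.sqrt_sq hc]

lemma frobPos {A : Matrix (Fin p) (Fin p) ℝ} (hA : A ≠ 0) : 0 < frobNorm A := by
  unfold frobNorm
  apply Real.sqrt_pos.mpr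
  obtain ⟨i, j, hij⟩ : ∃ i j, A i j ≠ 0 := by
    by_contra h
    push_neg at h
    exact hA (by ext i j; simp [h])
  refine Finset.sum_pos'
    (fun k _ => Finset.sum_nonneg fun _ _ => sq_nonneg _) ⟨i, Finset.mem_univ i, ?_⟩
  refine Finset.sum_pos' (fun _ _ => sq_nonneg _) ⟨j, Finset.mem_univ j, ?_⟩
  positivity

end AuxC3MA

theorem stmt4 {p n : ℕ} (hn : 1 ≤ n) (hnp : n < p) (κ : ℝ) (hκ : 1 ≤ κ)
    (S : Matrix (Fin p) (Fin p) ℝ)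
    (hS : S.PosSemidef) (hrank : S.rank = n) :
    ∀ Sighat : Matrix (Fin p) (Fin p) ℝ,
      Sighat.PosDef → lamMax Sighat ≤ κ * lamMin Sighat →
      (∀ M : Matrix (Fin p) (Fin p) ℝ, M.PosDef → lamMax M ≤ κ * lamMin M →
        frobNorm (Sighat - S) ≤ frobNorm (M - S)) →
      lamMax Sighat = κ * lamMin Sighat := by
  intro Sg hPD hfeas hopt
  by_contra hne
  have hp : 0 < p := lt_of_le_of_lt (Nat.zero_le n) hnp
  have hlt : lamMax Sg < κ * lamMin Sg := lt_of_le_of_ne hfeas hne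
  -- S is not a unit
  have hSnu : ¬ IsUnit S := by
    intro h
    have := Matrix.rank_of_isUnit S h
    rw [hrank, Fintype.card_fin] at this
    omega
  have h0S : (0 : ℝ) ∈ spectrum ℝ S := (spectrum.zero_mem_iff ℝ).mpr hSnu
  have hSfin := specFinite S
  have hSgfin := specFinite Sg
  have hSgne : (spectrum ℝ Sg).Nonempty := specNonempty hp hPD.1
  -- lamMin S = 0
  have hminS : lamMin S = 0 := by
    refine le_antisymm (csInf_le hSfin.bddBelow h0S) (le_csInf ⟨0, h0S⟩ (specNonneg hS))
  have hBnn : 0 ≤ lamMax S := le_csSup hSfin.bddAbove h0S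
  set a := lamMax Sg with ha
  set m := lamMin Sg with hm
  set B := lamMax S with hB
  set ε := κ * m - a with hε
  have hεpos : 0 < ε := by simp only [hε]; linarith
  set t := ε / (2 * (B + ε)) with ht
  have hden : 0 < 2 * (B + ε) := by linarith
  have htpos : 0 < t := div_pos hεpos hden
  have ht1 : t < 1 := by
    rw [ht, div_lt_one hden]; linarith
  have htkey : t * (B + ε) = ε / 2 := by
    rw [ht]; field_simp
  -- the competitor
  set M : Matrix (Fin p) (Fin p) ℝ := (1 - t) • Sg + t • S with hM
  have hMPD : M.PosDef := (pdSmul (by linarith) hPD).add_posSemidef (psdSmul (le_of_lt htpos) hS)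
  have hMfin := specFinite M
  have hMne : (spectrum ℝ M).Nonempty := specNonempty hp hMPD.1
  -- spectrum bounds for Sg and S
  have hSgUp : (a • (1 : Matrix (Fin p) (Fin p) ℝ) - Sg).PosSemidef :=
    upperPSD hPD.1 (fun r hr => le_csSup hSgfin.bddAbove hr)
  have hSgLo : (Sg - m • (1 : Matrix (Fin p) (Fin p) ℝ)).PosSemidef :=
    lowerPSD hPD.1 (fun r hr => csInf_le hSgfin.bddBelow hr)
  have hSUp : (B • (1 : Matrix (Fin p) (Fin p) ℝ) - S).PosSemidef :=
    upperPSD hS.1 (fun r hr => le_csSup hSfin.bddAbove hr)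
  -- lamMax M ≤ (1-t)*a + t*B
  have hMax : lamMax M ≤ (1 - t) * a + t * B := by
    have hcomb : (((1 - t) * a + t * B) • (1 : Matrix (Fin p) (Fin p) ℝ) - M)
        = (1 - t) • (a • (1 : Matrix (Fin p) (Fin p) ℝ) - Sg)
          + t • (B • (1 : Matrix (Fin p) (Fin p) ℝ) - S) := by
      rw [hM]; module
    have hPSD : (((1 - t) * a + t * B) • (1 : Matrix (Fin p) (Fin p) ℝ) - M).PosSemidef := by
      rw [hcomb]
      exact (psdSmul (by linarith) hSgUp).add (psdSmul (le_of_lt htpos) hSUp)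
    exact csSup_le hMne (specLeOfUpper hPSD)
  -- lamMin M ≥ (1-t)*m
  have hMin : (1 - t) * m ≤ lamMin M := by
    have hcomb : (M - ((1 - t) * m) • (1 : Matrix (Fin p) (Fin p) ℝ))
        = (1 - t) • (Sg - m • (1 : Matrix (Fin p) (Fin p) ℝ)) + t • S := by
      rw [hM]; module
    have hPSD : (M - ((1 - t) * m) • (1 : Matrix (Fin p) (Fin p) ℝ)).PosSemidef := by
      rw [hcomb]
      exact (psdSmul (by linarith) hSgLo).add (psdSmul (le_of_lt htpos) hS)
    exact le_csInf hMne (specGeOfLower hPSD)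
  -- feasibility of M
  have hMfeas : lamMax M ≤ κ * lamMin M := by
    have h1 : (1 - t) * a + t * B ≤ κ * ((1 - t) * m) := by
      have : t * B + t * ε ≤ ε := by nlinarith [htkey, hεpos]
      nlinarith
    calc lamMax M ≤ (1 - t) * a + t * B := hMax
      _ ≤ κ * ((1 - t) * m) := h1
      _ ≤ κ * lamMin M := by
          have hκ0 : (0:ℝ) ≤ κ := by linarith
          exact mul_le_mul_of_nonneg_left hMin hκ0
  -- strict improvement
  have hMS : M - S = (1 - t) • (Sg - S) := by rw [hM]; module
  have hne0 : Sg - S ≠ 0 := by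
    intro h
    have : Sg = S := by
      have := sub_eq_zero.mp h
      exact this
    exact hSnu (this ▸ (Matrix.isUnit_iff_isUnit_det Sg).mpr (isUnit_iff_ne_zero.mpr hPD.det_pos.ne'))
  have hfpos : 0 < frobNorm (Sg - S) := frobPos hne0
  have hlt2 : frobNorm (M - S) < frobNorm (Sg - S) := by
    rw [hMS, frobSmul _ (by linarith : (0:ℝ) ≤ 1 - t)]
    nlinarith
  exact absurd (hopt M hMPD hMfeas) (not_le.mpr hlt2)
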